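/- Let ρ be a positive definite density matrix on ℂⁿ ⊗ ℂᵐ (i.e., ρ ∈ M_{mn}(ℂ), ρ > 0, Tr ρ = 1). Then the Choi map Φ_ρ : Mₙ(ℂ) → Mₘ(ℂ) associated to ρ via the Choi–Jamiołkowski isomorphism is strictly positive. -/

import Mathlib

open Matrix
open scoped ComplexOrder Kronecker BigOperators

noncomputable def choiMatrix {n m : ℕ}
    (Φ : Matrix (Fin n) (Fin n) ℂ → Matrix (Fin m) (Fin m) ℂ) :
    Matrix (Fin n × Fin m) (Fin n × Fin m) ℂ :=
  ∑ i : Fin n, ∑ j : Fin n,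
    (Matrix.single i j (1 : ℂ)) ⊗ₖ Φ (Matrix.single i j (1 : ℂ))

lemma choi_entry {n m : ℕ} (Φ : Matrix (Fin n) (Fin n) ℂ → Matrix (Fin m) (Fin m) ℂ)
    (i j : Fin n) (k l : Fin m) :
    choiMatrix Φ (i, k) (j, l) = Φ (single i j 1) k l := by
  simp [choiMatrix, Matrix.sum_apply, single, ite_and, Finset.sum_ite_eq]

lemma phi_apply {n m : ℕ} (Φ : Matrix (Fin n) (Fin n) ℂ →ₗ[ℂ] Matrix (Fin m) (Fin m) ℂ)
    (ρ : Matrix (Fin n × Fin m) (Fin n × Fin m) ℂ)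
    (hρΦ : ρ = choiMatrix (fun X => Φ X))
    (A : Matrix (Fin n) (Fin n) ℂ) (k l : Fin m) :
    Φ A k l = ∑ i : Fin n, ∑ j : Fin n, A i j * ρ (i, k) (j, l) := by
  conv_lhs => rw [matrix_eq_sum_single A]
  rw [map_sum]
  simp only [Matrix.sum_apply]
  refine Finset.sum_congr rfl fun i _ => ?_
  rw [map_sum]
  simp only [Matrix.sum_apply]
  refine Finset.sum_congr rfl fun j _ => ?_
  have : single i j (A i j) = A i j • single i j (1 : ℂ) := by
    rw [smul_single, smul_eq_mul, mul_one]
  rw [this, _root_.map_smul, hρΦ, choi_entry]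
  simp [smul_eq_mul]

lemma sum3comm {M : Type*} [AddCommMonoid M] {α β γ : Type*}
    [Fintype α] [Fintype β] [Fintype γ] (g : α → β → γ → M) :
    (∑ a : α, ∑ b : β, ∑ c : γ, g a b c) = ∑ c : γ, ∑ a : α, ∑ b : β, g a b c := by
  calc (∑ a : α, ∑ b : β, ∑ c : γ, g a b c)
      = ∑ a : α, ∑ c : γ, ∑ b : β, g a b c :=
        Finset.sum_congr rfl fun _ _ => Finset.sum_comm
    _ = ∑ c : γ, ∑ a : α, ∑ b : β, g a b c := Finset.sum_comm

lemma sum5 {M : Type*} [AddCommMonoid M] {ιa ιb ιc ιd ιe : Type*}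
    [Fintype ιa] [Fintype ιb] [Fintype ιc] [Fintype ιd] [Fintype ιe]
    (f : ιa → ιb → ιc → ιd → ιe → M) :
    (∑ k : ιa, ∑ l : ιb, ∑ i : ιc, ∑ j : ιd, ∑ r : ιe, f k l i j r)
      = ∑ r : ιe, ∑ i : ιc, ∑ k : ιa, ∑ j : ιd, ∑ l : ιb, f k l i j r := by
  calc (∑ k : ιa, ∑ l : ιb, ∑ i : ιc, ∑ j : ιd, ∑ r : ιe, f k l i j r)
      = ∑ k : ιa, ∑ l : ιb, ∑ r : ιe, ∑ i : ιc, ∑ j : ιd, f k l i j r :=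
        Finset.sum_congr rfl fun k _ => Finset.sum_congr rfl fun l _ =>
          sum3comm (fun i j r => f k l i j r)
    _ = ∑ r : ιe, ∑ k : ιa, ∑ l : ιb, ∑ i : ιc, ∑ j : ιd, f k l i j r :=
        sum3comm (fun k l r => ∑ i : ιc, ∑ j : ιd, f k l i j r)
    _ = ∑ r : ιe, ∑ i : ιc, ∑ k : ιa, ∑ j : ιd, ∑ l : ιb, f k l i j r := by
        refine Finset.sum_congr rfl fun r _ => ?_
        calc (∑ k : ιa, ∑ l : ιb, ∑ i : ιc, ∑ j : ιd, f k l i j r)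
            = ∑ k : ιa, ∑ i : ιc, ∑ l : ιb, ∑ j : ιd, f k l i j r :=
              Finset.sum_congr rfl fun _ _ => Finset.sum_comm
          _ = ∑ i : ιc, ∑ k : ιa, ∑ l : ιb, ∑ j : ιd, f k l i j r := Finset.sum_comm
          _ = ∑ i : ιc, ∑ k : ιa, ∑ j : ιd, ∑ l : ιb, f k l i j r :=
              Finset.sum_congr rfl fun _ _ => Finset.sum_congr rfl fun _ _ =>
                Finset.sum_comm

theorem choi_map_strictly_positive (n m : ℕ)
    (Φ : Matrix (Fin n) (Fin n) ℂ →ₗ[ℂ] Matrix (Fin m) (Fin m) ℂ)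
    (ρ : Matrix (Fin n × Fin m) (Fin n × Fin m) ℂ)
    (hρΦ : ρ = choiMatrix (fun X => Φ X))
    (hρ : ρ.PosDef) (htr : ρ.trace = 1) :
    ∀ A : Matrix (Fin n) (Fin n) ℂ, A.PosSemidef → A ≠ 0 → (Φ A).PosDef := by
  intro A hA hA0
  obtain ⟨B, hB⟩ : ∃ B : Matrix (Fin n) (Fin n) ℂ, A = star B * B := by
    open scoped MatrixOrder Matrix.Norms.L2Operator in
    exact CStarAlgebra.nonneg_iff_eq_star_mul_self.mp hA.nonneg
  have hAent : ∀ i j, A i j = ∑ r : Fin n, star (B r i) * B r j := by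
    intro i j; rw [hB]; simp [Matrix.mul_apply, conjTranspose_apply]
  have hAherm : ∀ i j, star (A i j) = A j i := fun i j => by
    conv_rhs => rw [← hA.1]
    simp [conjTranspose_apply]
  have hρherm : ∀ p q, star (ρ p q) = ρ q p := fun p q => by
    conv_rhs => rw [← hρ.1]
    simp [conjTranspose_apply]
  refine posDef_iff_dotProduct_mulVec.mpr ⟨?_, ?_⟩
  · -- Hermitian
    ext k l
    rw [conjTranspose_apply, phi_apply Φ ρ hρΦ, phi_apply Φ ρ hρΦ]
    have : star (∑ i : Fin n, ∑ j : Fin n, A i j * ρ (i, l) (j, k))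
        = ∑ i : Fin n, ∑ j : Fin n, A j i * ρ (j, k) (i, l) := by
      simp only [star_sum, star_mul']
      exact Finset.sum_congr rfl fun i _ => Finset.sum_congr rfl fun j _ => by
        rw [hAherm, hρherm, mul_comm]
    rw [this, Finset.sum_comm]
  · intro y hy
    set x : Fin n → (Fin n × Fin m → ℂ) := fun r p => B r p.1 * y p.2 with hx
    have main : star y ⬝ᵥ (Φ A) *ᵥ y = ∑ r : Fin n, star (x r) ⬝ᵥ ρ *ᵥ (x r) := by
      simp only [dotProduct, mulVec, Pi.star_apply, phi_apply Φ ρ hρΦ, hAent, hx,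
        Finset.mul_sum, Finset.sum_mul, star_mul', Fintype.sum_prod_type]
      rw [sum5]
      exact Finset.sum_congr rfl fun r _ => Finset.sum_congr rfl fun i _ =>
        Finset.sum_congr rfl fun k _ => Finset.sum_congr rfl fun j _ =>
          Finset.sum_congr rfl fun l _ => by ring
    rw [main]
    -- find witness
    have hB0 : B ≠ 0 := fun h => hA0 (by simp [hB, h])
    obtain ⟨r0, hr0⟩ := Function.ne_iff.mp hB0
    obtain ⟨i0, hi0⟩ := Function.ne_iff.mp hr0
    obtain ⟨k0, hk0⟩ := Function.ne_iff.mp hy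
    have hx0 : x r0 ≠ 0 := by
      intro h
      have := congrFun h (i0, k0)
      simp only [hx, Pi.zero_apply] at this
      exact mul_ne_zero hi0 hk0 this
    refine Finset.sum_pos' (fun r _ => hρ.posSemidef.dotProduct_mulVec_nonneg (x r)) ⟨r0, Finset.mem_univ r0, hρ.dotProduct_mulVec_pos hx0⟩
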